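/- Assume (H') holds and m ∈ Q×{0}^q. Then (m + F) ∩ int(K) ≠ ∅, where int(K) denotes the interior of K. -/

import Mathlib

open MeasureTheory Filter
open scoped RealInnerProductSpace

noncomputable section

/-- The shifted cone `K_δ = Q_δ × ℝ^q` in `ℝ^{p+q}` (so `K = K_0`). -/
def Kcone (p q : ℕ) (δ : ℝ) : Set (EuclideanSpace ℝ (Fin (p + q))) :=
  {x | ∀ i : Fin (p + q), (i : ℕ) < p → δ ≤ x i}

/-- The set `Q × {0}^q ⊆ ℝ^{p+q}`. -/
def QZero (p q : ℕ) : Set (EuclideanSpace ℝ (Fin (p + q))) :=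
  {x | ∀ i : Fin (p + q), ((i : ℕ) < p → 0 ≤ x i) ∧ (p ≤ (i : ℕ) → x i = 0)}

/-- `‖x‖_J = (Σ_{j ∈ J} x_j²)^{1/2}` where `J = {j : m_j = 0}`. -/
def normJ {d : ℕ} (m x : EuclideanSpace ℝ (Fin d)) : ℝ :=
  Real.sqrt (∑ j, if m j = 0 then x j ^ 2 else 0)

/-- The covariance matrix `Γ_{ij} = ∫ (y_i − m_i)(y_j − m_j) dμ(y)`. -/
def covMatrix {d : ℕ} (μ : Measure (EuclideanSpace ℝ (Fin d)))
    (m : EuclideanSpace ℝ (Fin d)) : Matrix (Fin d) (Fin d) ℝ :=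
  Matrix.of fun i j => ∫ y, (y i - m i) * (y j - m j) ∂μ

/-- `F = (ker Γ)^⊥`, the orthogonal complement of the kernel of the covariance matrix. -/
def Fsub {d : ℕ} (μ : Measure (EuclideanSpace ℝ (Fin d)))
    (m : EuclideanSpace ℝ (Fin d)) : Submodule ℝ (EuclideanSpace ℝ (Fin d)) :=
  (LinearMap.ker (Matrix.toEuclideanLin (covMatrix μ m)))ᗮ

/-- The smoothed support `G = ℝ₊ m + F`. -/
def Gset {d : ℕ} (μ : Measure (EuclideanSpace ℝ (Fin d)))
    (m : EuclideanSpace ℝ (Fin d)) : Set (EuclideanSpace ℝ (Fin d)) :=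
  {z | ∃ lam : ℝ, 0 ≤ lam ∧ ∃ f ∈ Fsub μ m, z = lam • m + f}

open scoped Topology

lemma sep_lemma {p q : ℕ} (F : Submodule ℝ (EuclideanSpace ℝ (Fin (p+q))))
    (m : EuclideanSpace ℝ (Fin (p+q)))
    (h : ¬ ∃ f ∈ F, ∀ i : Fin (p+q), (i:ℕ) < p → m i = 0 → 0 < f i) :
    ∃ u ∈ QZero p q, u ≠ 0 ∧ u ∈ Fᗮ ∧ ∀ i, m i ≠ 0 → u i = 0 := by
  classical
  set C : Set (EuclideanSpace ℝ (Fin (p+q))) :=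
    {x | ∀ i : Fin (p+q), (i:ℕ) < p → m i = 0 → 0 < x i} with hC
  have hCconv : Convex ℝ C := by
    intro x hx y hy a b ha hb hab
    intro i hip hmi
    have hxi := hx i hip hmi
    have hyi := hy i hip hmi
    have hco : (a • x + b • y) i = a * x i + b * y i := rfl
    rw [hco]
    rcases eq_or_lt_of_le ha with ha0 | ha0
    · have hb1 : b = 1 := by linarith
      simp [← ha0, hb1, hyi]
    · have : 0 ≤ b * y i := mul_nonneg hb hyi.le
      nlinarith
  have hCopen : IsOpen C := by
    have hCe : C = ⋂ i : Fin (p+q),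
        {x : EuclideanSpace ℝ (Fin (p+q)) | (i:ℕ) < p → m i = 0 → 0 < x i} := by
      ext x; simp [hC, Set.mem_iInter]
    rw [hCe]
    apply isOpen_iInter_of_finite
    intro i
    by_cases hip : (i:ℕ) < p
    · by_cases hmi : m i = 0
      · have he : {x : EuclideanSpace ℝ (Fin (p+q)) | (i:ℕ) < p → m i = 0 → 0 < x i}
            = (fun x : EuclideanSpace ℝ (Fin (p+q)) => x i) ⁻¹' Set.Ioi 0 := by
          ext x; simp [hip, hmi]
        rw [he]
        exact IsOpen.preimage (PiLp.continuous_apply 2 _ i) isOpen_Ioi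
      · have he : {x : EuclideanSpace ℝ (Fin (p+q)) | (i:ℕ) < p → m i = 0 → 0 < x i}
            = Set.univ := by ext x; simp [hmi]
        rw [he]; exact isOpen_univ
    · have he : {x : EuclideanSpace ℝ (Fin (p+q)) | (i:ℕ) < p → m i = 0 → 0 < x i}
          = Set.univ := by ext x; simp [hip]
      rw [he]; exact isOpen_univ
  have hdisj : Disjoint C (F : Set (EuclideanSpace ℝ (Fin (p+q)))) := by
    rw [Set.disjoint_left]
    intro x hxC hxF
    exact h ⟨x, hxF, hxC⟩
  obtain ⟨φ, u₀, hφC, hφF⟩ := geometric_hahn_banach_open hCconv hCopen F.convex hdisj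
  have hu0 : u₀ ≤ 0 := by simpa using hφF 0 F.zero_mem
  have hφF0 : ∀ w ∈ F, φ w = 0 := by
    intro w hw
    by_contra hne
    have ht : φ (((u₀ - 1) / φ w) • w) = u₀ - 1 := by
      rw [ContinuousLinearMap.map_smul, smul_eq_mul]; field_simp
    have := hφF _ (F.smul_mem ((u₀ - 1) / φ w) hw)
    rw [ht] at this; linarith
  set x₀ : EuclideanSpace ℝ (Fin (p+q)) := (WithLp.equiv 2 _).symm (fun _ => (1:ℝ)) with hx₀def
  have hx₀i : ∀ i, x₀ i = 1 := fun i => rfl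
  have hx₀C : x₀ ∈ C := fun i _ _ => by rw [hx₀i]; norm_num
  have hφx₀ : φ x₀ < 0 := lt_of_lt_of_le (hφC x₀ hx₀C) hu0
  set v : EuclideanSpace ℝ (Fin (p+q)) := (InnerProductSpace.toDual ℝ _).symm φ with hvdef
  have hv : ∀ x, ⟪v, x⟫ = φ x := fun x => InnerProductSpace.toDual_symm_apply
  have hvi : ∀ i, v i = φ (EuclideanSpace.single i 1) := by
    intro i
    have h2 := hv (EuclideanSpace.single i 1)
    rw [EuclideanSpace.inner_single_right] at h2
    simpa using h2
  have hsingle : ∀ (i j : Fin (p+q)) (t : ℝ), (x₀ + t • EuclideanSpace.single j (1:ℝ)) i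
      = 1 + t * (if i = j then 1 else 0) := by
    intro i j t
    have hco : (x₀ + t • EuclideanSpace.single j (1:ℝ)) i = x₀ i + t * (EuclideanSpace.single j (1:ℝ) i) := rfl
    rw [hco, hx₀i, EuclideanSpace.single_apply]
  have hvz : ∀ j : Fin (p+q), ¬((j:ℕ) < p ∧ m j = 0) → v j = 0 := by
    intro j hj
    by_contra hne
    have hmem : ∀ t : ℝ, x₀ + t • EuclideanSpace.single j 1 ∈ C := by
      intro t i hip hmi
      rw [hsingle]
      have hij : i ≠ j := fun he => hj (he ▸ ⟨hip, hmi⟩)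
      simp [hij]
    have h3 := hφC _ (hmem ((u₀ - φ x₀) / v j))
    rw [map_add, ContinuousLinearMap.map_smul, smul_eq_mul, ← hvi,
      div_mul_cancel₀ _ hne] at h3
    linarith
  have hvneg : ∀ j : Fin (p+q), (j:ℕ) < p → m j = 0 → v j ≤ 0 := by
    intro j hjp hmj
    by_contra hpos
    push_neg at hpos
    have hmem : ∀ t : ℝ, 0 ≤ t → x₀ + t • EuclideanSpace.single j 1 ∈ C := by
      intro t ht i hip hmi
      rw [hsingle]
      by_cases hij : i = j
      · simp [hij]; linarith
      · simp [hij]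
    have htge : 0 ≤ (u₀ - φ x₀) / v j :=
      div_nonneg (by linarith [hφC x₀ hx₀C]) hpos.le
    have h3 := hφC _ (hmem _ htge)
    rw [map_add, ContinuousLinearMap.map_smul, smul_eq_mul, ← hvi,
      div_mul_cancel₀ _ (ne_of_gt hpos)] at h3
    linarith
  have hnegapp : ∀ i, (-v) i = -(v i) := fun i => rfl
  refine ⟨-v, ?_, ?_, ?_, ?_⟩
  · intro i
    rw [hnegapp]
    constructor
    · intro hip
      by_cases hmi : m i = 0
      · have := hvneg i hip hmi
        linarith
      · have := hvz i (fun hc => hmi hc.2)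
        simp [this]
    · intro hpi
      have := hvz i (fun hc => by omega)
      simp [this]
  · intro hc
    have hv0 : v = 0 := neg_eq_zero.mp hc
    have h4 := hv x₀
    rw [hv0, inner_zero_left] at h4
    rw [← h4] at hφx₀
    exact lt_irrefl 0 hφx₀
  · rw [Submodule.mem_orthogonal]
    intro w hw
    rw [real_inner_comm, inner_neg_left, hv, hφF0 w hw, neg_zero]
  · intro i hmi
    rw [hnegapp, hvz i (fun hc => hmi hc.2), neg_zero]

lemma abs_coord_le_norm {d : ℕ} (x : EuclideanSpace ℝ (Fin d)) (i : Fin d) : |x i| ≤ ‖x‖ := by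
  rw [EuclideanSpace.norm_eq]
  have h : |x i| = Real.sqrt (‖x i‖ ^ 2) := by rw [Real.sqrt_sq_eq_abs]; simp
  rw [h]
  apply Real.sqrt_le_sqrt
  exact Finset.single_le_sum (f := fun j => ‖x j‖ ^ 2) (fun j _ => by positivity) (Finset.mem_univ i)

lemma integ_prod {d : ℕ} (μ : Measure (EuclideanSpace ℝ (Fin d))) [IsProbabilityMeasure μ]
    (m : EuclideanSpace ℝ (Fin d))
    (hint : Integrable (fun y => y) μ) (hsq : Integrable (fun y => ‖y‖ ^ 2) μ)
    (i j : Fin d) : Integrable (fun y => (y i - m i) * (y j - m j)) μ := by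
  have hmeas : AEStronglyMeasurable (fun y : EuclideanSpace ℝ (Fin d) =>
      (y i - m i) * (y j - m j)) μ :=
    (((PiLp.continuous_apply 2 _ i).sub continuous_const).mul
      ((PiLp.continuous_apply 2 _ j).sub continuous_const)).aestronglyMeasurable
  have hgint : Integrable (fun y : EuclideanSpace ℝ (Fin d) =>
      ‖y‖ ^ 2 + (2 * ‖m‖ * ‖y‖ + ‖m‖ ^ 2)) μ :=
    hsq.add ((hint.norm.const_mul (2 * ‖m‖)).add (integrable_const _))
  apply hgint.mono' hmeas
  filter_upwards with y
  have hi : |y i - m i| ≤ ‖y‖ + ‖m‖ :=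
    le_trans (abs_sub _ _) (by linarith [abs_coord_le_norm y i, abs_coord_le_norm m i])
  have hj : |y j - m j| ≤ ‖y‖ + ‖m‖ :=
    le_trans (abs_sub _ _) (by linarith [abs_coord_le_norm y j, abs_coord_le_norm m j])
  have habs : ‖(y i - m i) * (y j - m j)‖ = |y i - m i| * |y j - m j| := by
    rw [Real.norm_eq_abs, abs_mul]
  rw [habs]
  nlinarith [abs_nonneg (y i - m i), abs_nonneg (y j - m j)]

lemma ker_to_measure {d : ℕ} (μ : Measure (EuclideanSpace ℝ (Fin d))) [IsProbabilityMeasure μ]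
    (m : EuclideanSpace ℝ (Fin d))
    (hint : Integrable (fun y => y) μ) (hsq : Integrable (fun y => ‖y‖ ^ 2) μ)
    (u : EuclideanSpace ℝ (Fin d))
    (hker : Matrix.toEuclideanLin (covMatrix μ m) u = 0)
    (hmu : ∀ i, m i * u i = 0) :
    μ {x | ⟪x, u⟫ ≤ 0} = 1 := by
  classical
  set g : EuclideanSpace ℝ (Fin d) → ℝ := fun y => ∑ i, u i * (y i - m i) with hg
  -- g y ^ 2 as double sum
  have hg2 : ∀ y, g y ^ 2 = ∑ i, ∑ j, (u i * u j) * ((y i - m i) * (y j - m j)) := by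
    intro y
    rw [hg, sq, Finset.sum_mul_sum]
    apply Finset.sum_congr rfl; intro i _
    apply Finset.sum_congr rfl; intro j _
    ring
  have hprodint : ∀ i j, Integrable (fun y => (u i * u j) * ((y i - m i) * (y j - m j))) μ :=
    fun i j => (integ_prod μ m hint hsq i j).const_mul _
  have hg2int : Integrable (fun y => g y ^ 2) μ := by
    have : Integrable (fun y => ∑ i, ∑ j, (u i * u j) * ((y i - m i) * (y j - m j))) μ := by
      apply integrable_finset_sum
      intro i _
      exact integrable_finset_sum _ (fun j _ => hprodint i j)
    exact this.congr (by filter_upwards with y using (hg2 y).symm)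
  -- the integral is zero
  have hAu : ∀ i, ∑ j, covMatrix μ m i j * u j = 0 := by
    intro i
    have h0 : Matrix.toEuclideanLin (covMatrix μ m) u i = 0 := by rw [hker]; rfl
    rw [Matrix.toEuclideanLin_apply] at h0
    exact h0
  have hint0 : ∫ y, g y ^ 2 ∂μ = 0 := by
    have hcalc : ∫ y, g y ^ 2 ∂μ
        = ∑ i, ∑ j, (u i * u j) * ∫ y, (y i - m i) * (y j - m j) ∂μ := by
      rw [integral_congr_ae (Eventually.of_forall hg2)]
      rw [integral_finset_sum _ (fun i _ => integrable_finset_sum _ (fun j _ => hprodint i j))]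
      apply Finset.sum_congr rfl; intro i _
      rw [integral_finset_sum _ (fun j _ => hprodint i j)]
      apply Finset.sum_congr rfl; intro j _
      rw [integral_const_mul]
    rw [hcalc]
    have : ∀ i ∈ Finset.univ, ∑ j, (u i * u j) * ∫ y, (y i - m i) * (y j - m j) ∂μ
        = u i * ∑ j, covMatrix μ m i j * u j := by
      intro i _
      rw [Finset.mul_sum]
      apply Finset.sum_congr rfl; intro j _
      simp only [covMatrix, Matrix.of_apply]
      ring
    rw [Finset.sum_congr rfl this]
    simp [hAu]
  -- hence g = 0 a.e.
  have hgae : (fun y => g y ^ 2) =ᵐ[μ] 0 :=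
    (integral_eq_zero_iff_of_nonneg (fun y => sq_nonneg (g y)) hg2int).mp hint0
  have hae : ∀ᵐ y ∂μ, ⟪y, u⟫ ≤ 0 := by
    filter_upwards [hgae] with y hy
    have hgy : g y = 0 := by
      have := hy
      simp only [Pi.zero_apply] at this
      exact pow_eq_zero_iff (n := 2) (by norm_num) |>.mp this
    have hinner : ⟪y, u⟫ = g y := by
      rw [PiLp.inner_apply, hg]
      simp only [RCLike.inner_apply, starRingEnd_apply, star_trivial]
      apply Finset.sum_congr rfl; intro i _
      have := hmu i
      ring_nf
      nlinarith [hmu i]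
    rw [hinner, hgy]
  have hmeas : MeasurableSet {x : EuclideanSpace ℝ (Fin d) | ⟪x, u⟫ ≤ 0} := by
    have : Continuous fun x : EuclideanSpace ℝ (Fin d) => ⟪x, u⟫ :=
      continuous_inner.comp (continuous_id.prodMk continuous_const)
    exact measurableSet_le this.measurable measurable_const
  rw [← measure_univ (μ := μ)]
  apply measure_congr
  rw [Filter.eventuallyEq_set]
  filter_upwards [hae] with y hy
  simp only [Set.mem_setOf_eq, Set.mem_univ, iff_true]
  exact hy

/-- Under (H') and `m ∈ Q×{0}^q`, `(m + F) ∩ int(K) ≠ ∅`. -/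
theorem stmt11 (p q : ℕ) (hp : 1 ≤ p)
    (μ : Measure (EuclideanSpace ℝ (Fin (p + q)))) [IsProbabilityMeasure μ]
    (m : EuclideanSpace ℝ (Fin (p + q)))
    (hint : Integrable (fun y => y) μ) (hmean : ∫ y, y ∂μ = m)
    (hsq : Integrable (fun y => ‖y‖ ^ 2) μ)
    (hm : m ∈ QZero p q)
    (hH : ∀ u ∈ QZero p q, u ≠ 0 → μ {x | ⟪x, u⟫ ≤ 0} ≠ 1) :
    ({z | ∃ f ∈ Fsub μ m, z = m + f} ∩ interior (Kcone p q 0)).Nonempty := by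
  classical
  obtain ⟨f, hfF, hfpos⟩ : ∃ f ∈ Fsub μ m, ∀ i : Fin (p+q), (i:ℕ) < p → m i = 0 → 0 < f i := by
    by_contra h
    obtain ⟨u, huQ, hu0, huF, humz⟩ := sep_lemma (Fsub μ m) m h
    have h5 : (Fsub μ m)ᗮ = LinearMap.ker (Matrix.toEuclideanLin (covMatrix μ m)) :=
      Submodule.orthogonal_orthogonal _
    rw [h5] at huF
    have hA : Matrix.toEuclideanLin (covMatrix μ m) u = 0 := huF
    have hmu : ∀ i, m i * u i = 0 := by
      intro i
      by_cases hmi : m i = 0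
      · rw [hmi, zero_mul]
      · rw [humz i hmi, mul_zero]
    exact hH u huQ hu0 (ker_to_measure μ m hint hsq u hA hmu)
  have hev : ∀ᶠ ε in 𝓝[>] (0:ℝ), ∀ i : Fin (p+q), (i:ℕ) < p → m i ≠ 0 → ε * |f i| < m i := by
    rw [eventually_all]
    intro i
    by_cases hip : (i:ℕ) < p
    · by_cases hmi : m i = 0
      · filter_upwards with ε _ h2; exact absurd hmi h2
      · have hmipos : 0 < m i := lt_of_le_of_ne ((hm i).1 hip) (Ne.symm hmi)
        have ht : Tendsto (fun ε : ℝ => ε * |f i|) (𝓝[>] 0) (𝓝 0) := by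
          have h6 : Tendsto (fun ε : ℝ => ε * |f i|) (𝓝 0) (𝓝 (0 * |f i|)) :=
            (continuous_id.mul continuous_const).tendsto 0
          rw [zero_mul] at h6
          exact h6.mono_left nhdsWithin_le_nhds
        filter_upwards [ht.eventually_lt_const hmipos] with ε h _ _
        exact h
    · filter_upwards with ε h; exact absurd h hip
  obtain ⟨ε, hεb, hεIoi⟩ := (hev.and self_mem_nhdsWithin).exists
  have hεpos : (0:ℝ) < ε := hεIoi
  refine ⟨m + ε • f, ⟨ε • f, Submodule.smul_mem _ _ hfF, rfl⟩, ?_⟩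
  have hUopen : IsOpen {x : EuclideanSpace ℝ (Fin (p+q)) | ∀ i : Fin (p+q), (i:ℕ) < p → 0 < x i} := by
    have hUe : {x : EuclideanSpace ℝ (Fin (p+q)) | ∀ i : Fin (p+q), (i:ℕ) < p → 0 < x i}
        = ⋂ i : Fin (p+q), {x : EuclideanSpace ℝ (Fin (p+q)) | (i:ℕ) < p → 0 < x i} := by
      ext x; simp [Set.mem_iInter]
    rw [hUe]
    apply isOpen_iInter_of_finite
    intro i
    by_cases hip : (i:ℕ) < p
    · have he : {x : EuclideanSpace ℝ (Fin (p+q)) | (i:ℕ) < p → 0 < x i}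
          = (fun x : EuclideanSpace ℝ (Fin (p+q)) => x i) ⁻¹' Set.Ioi 0 := by
        ext x; simp [hip]
      rw [he]
      exact IsOpen.preimage (PiLp.continuous_apply 2 _ i) isOpen_Ioi
    · have he : {x : EuclideanSpace ℝ (Fin (p+q)) | (i:ℕ) < p → 0 < x i} = Set.univ := by
        ext x; simp [hip]
      rw [he]; exact isOpen_univ
  have hUsub : {x : EuclideanSpace ℝ (Fin (p+q)) | ∀ i : Fin (p+q), (i:ℕ) < p → 0 < x i}
      ⊆ Kcone p q 0 := fun x hx i hip => (hx i hip).le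
  apply interior_maximal hUsub hUopen
  intro i hip
  have hco : (m + ε • f) i = m i + ε * f i := rfl
  rw [hco]
  by_cases hmi : m i = 0
  · rw [hmi, zero_add]
    exact mul_pos hεpos (hfpos i hip hmi)
  · have h1 := hεb i hip hmi
    nlinarith [neg_abs_le (f i), le_abs_self (f i)]
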